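/- In the folding B_n ↪ D_{n+1} with γ_a = 2 for a < n and γ_n = 1, for a one-column B_n tableau t of height r < n, the image v(t) is a two-column D_{n+1} tableau containing neither the letter n+1 nor the letter (n+1)-bar; more precisely, since f_n^v = f̂_n f̂_{n+1} sends n directly to n̄ (through n+1 or (n+1)-bar as an intermediate that is immediately removed), any element of the virtual crystal generated from the highest weight element (which contains no n+1 or (n+1)-bar) contains no occurrence of n+1 or (n+1)-bar. -/

import Mathlib

/-- Letters of the type `D_{n+1}` vector crystal: `(k, false)` is the letter `k`
and `(k, true)` is the barred letter `k̄`, for `1 ≤ k ≤ n+1`. -/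
abbrev DLetter := ℕ × Bool

/-- The single-box crystal operator `f̂_a` of type `D_{n+1}` (for `1 ≤ a ≤ n+1`):
for `a ≤ n`, `a ↦ a+1` and `(a+1)‾ ↦ ā`; for `a = n+1`, `n ↦ (n+1)‾` and
`n+1 ↦ n̄`. -/
def fBox (n a : ℕ) (x : DLetter) : Option DLetter :=
  if a ≤ n then
    if x = (a, false) then some (a + 1, false)
    else if x = (a + 1, true) then some (a, true)
    else none
  else
    if x = (n, false) then some (n + 1, true)
    else if x = (n + 1, false) then some (n, true)
    else none

/-- The single-box crystal operator `ê_a` of type `D_{n+1}`. -/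
def eBox (n a : ℕ) (x : DLetter) : Option DLetter :=
  if a ≤ n then
    if x = (a + 1, false) then some (a, false)
    else if x = (a, true) then some (a + 1, true)
    else none
  else
    if x = (n + 1, true) then some (n, false)
    else if x = (n, true) then some (n + 1, false)
    else none

def phiBox (n a : ℕ) (x : DLetter) : ℤ := if (fBox n a x).isSome then 1 else 0

def epsBox (n a : ℕ) (x : DLetter) : ℤ := if (eBox n a x).isSome then 1 else 0

/-- `φ_a` of a word (a column read as a tensor product of boxes, the head of
the list being the leftmost factor), by the tensor product rule. -/
def phiList (n a : ℕ) : List DLetter → ℤ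
  | [] => 0
  | x :: xs => max (phiBox n a x) (phiBox n a x + phiList n a xs - epsBox n a x)

/-- `ε_a` of a word by the tensor product rule. -/
def epsList (n a : ℕ) : List DLetter → ℤ
  | [] => 0
  | x :: xs => max (epsList n a xs) (epsList n a xs + epsBox n a x - phiList n a xs)

/-- `f̂_a` on words via the tensor product (signature) rule. -/
def fList (n a : ℕ) : List DLetter → Option (List DLetter)
  | [] => none
  | x :: xs =>
      if phiList n a xs ≤ epsBox n a x then (fBox n a x).map (· :: xs)
      else (fList n a xs).map (x :: ·)

/-- `ê_a` on words via the tensor product (signature) rule. -/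
def eList (n a : ℕ) : List DLetter → Option (List DLetter)
  | [] => none
  | x :: xs =>
      if phiList n a xs < epsBox n a x then (eBox n a x).map (· :: xs)
      else (eList n a xs).map (x :: ·)

/-- The virtual crystal operator `f_a^v` for the folding `Bₙ ↪ D_{n+1}`:
`f_a^v = f̂_a²` for `a < n` and `f_n^v = f̂_n f̂_{n+1}`. -/
def fVirtB (n a : ℕ) (l : List DLetter) : Option (List DLetter) :=
  if a < n then (fList n a l).bind (fList n a)
  else (fList n a l).bind (fList n (n + 1))

/-- The virtual crystal operator `e_a^v` for the folding `Bₙ ↪ D_{n+1}`. -/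
def eVirtB (n a : ℕ) (l : List DLetter) : Option (List DLetter) :=
  if a < n then (eList n a l).bind (eList n a)
  else (eList n a l).bind (eList n (n + 1))

/-- A word contains neither the letter `n+1` nor the letter `(n+1)‾`. -/
def NoSpinLetter (n : ℕ) (l : List DLetter) : Prop := ∀ x ∈ l, x.1 ≠ n + 1

section Aux

variable {n : ℕ}

lemma ne_pair {x : DLetter} (hx : x.1 ≠ n + 1) (b : Bool) : x ≠ (n + 1, b) := by
  intro h; exact hx (by rw [h])

lemma fBox_nn {x : DLetter} (hx : x.1 ≠ n + 1) :
    fBox n n x = if x = (n, false) then some (n + 1, false) else none := by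
  simp [fBox, ne_pair hx true]

lemma eBox_nn {x : DLetter} (hx : x.1 ≠ n + 1) :
    eBox n n x = if x = (n, true) then some (n + 1, true) else none := by
  simp [eBox, ne_pair hx false]

lemma fBox_ns {x : DLetter} (hx : x.1 ≠ n + 1) :
    fBox n (n + 1) x = if x = (n, false) then some (n + 1, true) else none := by
  simp [fBox, ne_pair hx false]

lemma eBox_ns {x : DLetter} (hx : x.1 ≠ n + 1) :
    eBox n (n + 1) x = if x = (n, true) then some (n + 1, false) else none := by
  simp [eBox, ne_pair hx true]

lemma phiBox_eq {x : DLetter} (hx : x.1 ≠ n + 1) :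
    phiBox n (n + 1) x = phiBox n n x := by
  simp only [phiBox, fBox_nn hx, fBox_ns hx]
  split <;> simp

lemma epsBox_eq {x : DLetter} (hx : x.1 ≠ n + 1) :
    epsBox n (n + 1) x = epsBox n n x := by
  simp only [epsBox, eBox_nn hx, eBox_ns hx]
  split <;> simp

lemma listEq : ∀ l : List DLetter, NoSpinLetter n l →
    phiList n (n + 1) l = phiList n n l ∧ epsList n (n + 1) l = epsList n n l := by
  intro l
  induction l with
  | nil => intro _; exact ⟨rfl, rfl⟩
  | cons x xs ih =>
    intro hl
    simp only [NoSpinLetter, List.mem_cons, forall_eq_or_imp] at hl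
    obtain ⟨hx, hxs⟩ := hl
    obtain ⟨hp, he⟩ := ih hxs
    constructor
    · simp [phiList, hp, phiBox_eq hx, epsBox_eq hx]
    · simp [epsList, hp, he, phiBox_eq hx, epsBox_eq hx]

end Aux

section Aux2

variable {n a : ℕ}

lemma fBox_noSpin (h : a < n) {x y : DLetter} (hx : fBox n a x = some y) :
    y.1 ≠ n + 1 := by
  have ha : a ≤ n := le_of_lt h
  simp only [fBox, if_pos ha] at hx
  split_ifs at hx with h1 h2
  · cases hx; omega
  · cases hx; omega

lemma eBox_noSpin (h : a < n) {x y : DLetter} (hx : eBox n a x = some y) :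
    y.1 ≠ n + 1 := by
  have ha : a ≤ n := le_of_lt h
  simp only [eBox, if_pos ha] at hx
  split_ifs at hx with h1 h2
  · cases hx; omega
  · cases hx; omega

lemma fList_noSpin (h : a < n) : ∀ l m : List DLetter, NoSpinLetter n l →
    fList n a l = some m → NoSpinLetter n m := by
  intro l
  induction l with
  | nil => intro m _ hm; simp [fList] at hm
  | cons x xs ih =>
    intro m hl hm
    simp only [NoSpinLetter, List.mem_cons, forall_eq_or_imp] at hl
    obtain ⟨hx, hxs⟩ := hl
    simp only [fList] at hm
    split_ifs at hm with hc
    · obtain ⟨y, hy, rfl⟩ := Option.map_eq_some_iff.1 hm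
      intro z hz
      rcases List.mem_cons.1 hz with rfl | hz
      · exact fBox_noSpin h hy
      · exact hxs z hz
    · obtain ⟨m', hm', rfl⟩ := Option.map_eq_some_iff.1 hm
      intro z hz
      rcases List.mem_cons.1 hz with rfl | hz
      · exact hx
      · exact ih m' hxs hm' z hz

lemma eList_noSpin (h : a < n) : ∀ l m : List DLetter, NoSpinLetter n l →
    eList n a l = some m → NoSpinLetter n m := by
  intro l
  induction l with
  | nil => intro m _ hm; simp [eList] at hm
  | cons x xs ih =>
    intro m hl hm
    simp only [NoSpinLetter, List.mem_cons, forall_eq_or_imp] at hl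
    obtain ⟨hx, hxs⟩ := hl
    simp only [eList] at hm
    split_ifs at hm with hc
    · obtain ⟨y, hy, rfl⟩ := Option.map_eq_some_iff.1 hm
      intro z hz
      rcases List.mem_cons.1 hz with rfl | hz
      · exact eBox_noSpin h hy
      · exact hxs z hz
    · obtain ⟨m', hm', rfl⟩ := Option.map_eq_some_iff.1 hm
      intro z hz
      rcases List.mem_cons.1 hz with rfl | hz
      · exact hx
      · exact ih m' hxs hm' z hz

end Aux2

section Aux3

variable {n : ℕ}

lemma box_vals (n : ℕ) :
    epsBox n n ((n : ℕ), false) = 0 ∧ phiBox n n ((n : ℕ), false) = 1 ∧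
    phiBox n (n + 1) ((n + 1 : ℕ), false) = 1 ∧ epsBox n (n + 1) ((n + 1 : ℕ), false) = 0 ∧
    fBox n (n + 1) ((n + 1 : ℕ), false) = some ((n : ℕ), true) ∧
    epsBox n n ((n : ℕ), true) = 1 ∧ phiBox n n ((n : ℕ), true) = 0 ∧
    phiBox n (n + 1) ((n + 1 : ℕ), true) = 0 ∧ epsBox n (n + 1) ((n + 1 : ℕ), true) = 1 ∧
    eBox n (n + 1) ((n + 1 : ℕ), true) = some ((n : ℕ), false) := by
  have h1 : ¬ ((n : ℕ) = n + 1) := by omega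
  have h2 : ¬ ((n + 1 : ℕ) = n) := by omega
  have h3 : ¬ (n + 1 ≤ n) := by omega
  refine ⟨?_, ?_, ?_, ?_, ?_, ?_, ?_, ?_, ?_, ?_⟩ <;>
    simp [epsBox, phiBox, eBox, fBox, Prod.ext_iff, h1, h2, h3]

lemma keyF : ∀ l m : List DLetter, NoSpinLetter n l → fList n n l = some m →
    phiList n (n + 1) m = phiList n n l ∧ epsList n (n + 1) m = epsList n n l ∧
    ∃ l', fList n (n + 1) m = some l' ∧ NoSpinLetter n l' := by
  intro l
  induction l with
  | nil => intro m _ hm; simp [fList] at hm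
  | cons x xs ih =>
    intro m hl hm
    simp only [NoSpinLetter, List.mem_cons, forall_eq_or_imp] at hl
    obtain ⟨hx, hxs⟩ := hl
    obtain ⟨hpt, het⟩ := listEq xs hxs
    obtain ⟨v1, v2, v3, v4, v5, v6, v7, v8, v9, v10⟩ := box_vals n
    simp only [fList] at hm
    split_ifs at hm with hc
    · obtain ⟨y, hy, rfl⟩ := Option.map_eq_some_iff.1 hm
      rw [fBox_nn hx] at hy
      split_ifs at hy with hxf
      cases hy
      subst hxf
      rw [v1] at hc
      refine ⟨?_, ?_, ((n : ℕ), true) :: xs, ?_, ?_⟩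
      · simp [phiList, v2, v3, v1, v4, hpt]
      · simp [epsList, v1, v4, hpt, het]
      · simp only [fList, hpt, v4, if_pos hc, v5, Option.map_some]
      · intro z hz
        rcases List.mem_cons.1 hz with rfl | hz
        · omega
        · exact hxs z hz
    · obtain ⟨m', hm', rfl⟩ := Option.map_eq_some_iff.1 hm
      obtain ⟨hp, he, l'', hf, hns⟩ := ih m' hxs hm'
      have hcond : ¬ phiList n (n + 1) m' ≤ epsBox n (n + 1) x := by
        rw [hp, epsBox_eq hx]; exact hc
      refine ⟨?_, ?_, x :: l'', ?_, ?_⟩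
      · simp [phiList, hp, phiBox_eq hx, epsBox_eq hx]
      · simp [epsList, hp, he, phiBox_eq hx, epsBox_eq hx]
      · simp only [fList, if_neg hcond, hf, Option.map_some]
      · intro z hz
        rcases List.mem_cons.1 hz with rfl | hz
        · exact hx
        · exact hns z hz

lemma keyE : ∀ l m : List DLetter, NoSpinLetter n l → eList n n l = some m →
    phiList n (n + 1) m = phiList n n l ∧ epsList n (n + 1) m = epsList n n l ∧
    ∃ l', eList n (n + 1) m = some l' ∧ NoSpinLetter n l' := by
  intro l
  induction l with
  | nil => intro m _ hm; simp [eList] at hm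
  | cons x xs ih =>
    intro m hl hm
    simp only [NoSpinLetter, List.mem_cons, forall_eq_or_imp] at hl
    obtain ⟨hx, hxs⟩ := hl
    obtain ⟨hpt, het⟩ := listEq xs hxs
    obtain ⟨v1, v2, v3, v4, v5, v6, v7, v8, v9, v10⟩ := box_vals n
    simp only [eList] at hm
    split_ifs at hm with hc
    · obtain ⟨y, hy, rfl⟩ := Option.map_eq_some_iff.1 hm
      rw [eBox_nn hx] at hy
      split_ifs at hy with hxf
      cases hy
      subst hxf
      rw [v6] at hc
      refine ⟨?_, ?_, ((n : ℕ), false) :: xs, ?_, ?_⟩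
      · simp [phiList, v7, v8, v6, v9, hpt]
      · simp [epsList, v6, v9, hpt, het]
      · simp only [eList, hpt, v9, if_pos hc, v10, Option.map_some]
      · intro z hz
        rcases List.mem_cons.1 hz with rfl | hz
        · omega
        · exact hxs z hz
    · obtain ⟨m', hm', rfl⟩ := Option.map_eq_some_iff.1 hm
      obtain ⟨hp, he, l'', hf, hns⟩ := ih m' hxs hm'
      have hcond : ¬ phiList n (n + 1) m' < epsBox n (n + 1) x := by
        rw [hp, epsBox_eq hx]; exact hc
      refine ⟨?_, ?_, x :: l'', ?_, ?_⟩
      · simp [phiList, hp, phiBox_eq hx, epsBox_eq hx]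
      · simp [epsList, hp, he, phiBox_eq hx, epsBox_eq hx]
      · simp only [eList, if_neg hcond, hf, Option.map_some]
      · intro z hz
        rcases List.mem_cons.1 hz with rfl | hz
        · exact hx
        · exact hns z hz

end Aux3

/-- For the folding `Bₙ ↪ D_{n+1}` (with `γ_a = 2` for `a < n` and `γ_n = 1`),
since `f_n^v = f̂_n f̂_{n+1}` sends `n` directly to `n̄` (through `n+1` or
`(n+1)‾` as an intermediate that is immediately removed), the set of type
`D_{n+1}` words with no occurrence of the letters `n+1` or `(n+1)‾` is closed
under all virtual crystal operators `f_a^v` and `e_a^v`, `1 ≤ a ≤ n`. -/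
theorem noSpinLetter_closed_B (n : ℕ) (hn : 2 ≤ n) (a : ℕ) (ha : 1 ≤ a) (ha' : a ≤ n)
    (l l' : List DLetter) (hl : NoSpinLetter n l) :
    (fVirtB n a l = some l' → NoSpinLetter n l') ∧
      (eVirtB n a l = some l' → NoSpinLetter n l') := by
  rcases lt_or_eq_of_le ha' with hlt | rfl
  · constructor
    · intro h
      simp only [fVirtB, if_pos hlt] at h
      obtain ⟨m, hm, hm'⟩ := Option.bind_eq_some_iff.1 h
      exact fList_noSpin hlt m l' (fList_noSpin hlt l m hl hm) hm'
    · intro h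
      simp only [eVirtB, if_pos hlt] at h
      obtain ⟨m, hm, hm'⟩ := Option.bind_eq_some_iff.1 h
      exact eList_noSpin hlt m l' (eList_noSpin hlt l m hl hm) hm'
  · have hnlt : ¬ a < a := lt_irrefl a
    constructor
    · intro h
      simp only [fVirtB, if_neg hnlt] at h
      obtain ⟨m, hm, hm'⟩ := Option.bind_eq_some_iff.1 h
      obtain ⟨-, -, l'', hf, hns⟩ := keyF l m hl hm
      rw [hf] at hm'
      cases hm'
      exact hns
    · intro h
      simp only [eVirtB, if_neg hnlt] at h
      obtain ⟨m, hm, hm'⟩ := Option.bind_eq_some_iff.1 h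
      obtain ⟨-, -, l'', hf, hns⟩ := keyE l m hl hm
      rw [hf] at hm'
      cases hm'
      exact hns
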